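/- Let n ≥ 2, let I1, I2 be disjoint nonempty subsets of {1,…,n}, and let β ∈ [0, 1 − 1/n]. Then there exists a sequence of center sets {C^t}_{t≥0} ⊆ {1,…,n} and a sequence of matrices {W^t}_{t≥0} ⊆ ℝ^{n×n} such that: (1) for every t, W^t ∈ W_{n,β} and W^t is compatible with the sun-shaped graph S_{n,C^t} (i.e., the (i,j) entry of W^t is 0 whenever i ≠ j and i, j are not adjacent in S_{n,C^t}); and (2) there exist absolute constants c, C > 0 (independent of n, β, I1, I2) such that c·((1 − (|I1|+|I2|)/n)/(1−β) + 1) ≤ dist_{{S_{n,C^t}}}(I1, I2) ≤ C·((1 − (|I1|+|I2|)/n)/(1−β) + 1). In particular, if 1 − (|I1|+|I2|)/n ≥ c₀ for an absolute constant c₀ > 0, then dist_{{S_{n,C^t}}}(I1, I2) = Θ((1−β)^{−1}). -/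

import Mathlib

set_option autoImplicit false
set_option maxHeartbeats 1000000

open Matrix MeasureTheory

noncomputable section

/-- The all-ones vector in `ℝ^n`. -/
def onesVec (n : ℕ) : Fin n → ℝ := fun _ => 1

/-- The all-ones `n × n` matrix `𝟙𝟙ᵀ`. -/
def onesMat (n : ℕ) : Matrix (Fin n) (Fin n) ℝ := Matrix.of fun _ _ => (1 : ℝ)

/-- The averaging matrix `(1/n)𝟙𝟙ᵀ`. -/
def avgMat (n : ℕ) : Matrix (Fin n) (Fin n) ℝ := (n : ℝ)⁻¹ • onesMat n

/-- Spectral norm (largest singular value) of a real matrix. -/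
def specNorm {m n : ℕ} (M : Matrix (Fin m) (Fin n) ℝ) : ℝ :=
  ‖(Matrix.toEuclideanLin (𝕜 := ℝ) M).toContinuousLinearMap‖

/-- Frobenius norm of a real matrix. -/
def frobNorm {m n : ℕ} (M : Matrix (Fin m) (Fin n) ℝ) : ℝ :=
  Real.sqrt (∑ i, ∑ j, (M i j) ^ 2)

/-- The weight-matrix class `W_{n,β}`. -/
def memW (n : ℕ) (β : ℝ) (W : Matrix (Fin n) (Fin n) ℝ) : Prop :=
  W *ᵥ onesVec n = onesVec n ∧ onesVec n ᵥ* W = onesVec n ∧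
    specNorm (W - avgMat n) ≤ β

/-- The sun-shaped graph `S_{n,C}`. -/
def sunGraph (n : ℕ) (C : Finset (Fin n)) : SimpleGraph (Fin n) where
  Adj i j := i ≠ j ∧ (i ∈ C ∨ j ∈ C)
  symm := by
    refine ⟨?_⟩
    intro i j h
    exact ⟨fun hej => h.1 hej.symm, h.2.symm⟩
  loopless := by refine ⟨?_⟩; intro i h; exact h.1 rfl

instance (n : ℕ) (C : Finset (Fin n)) : DecidableRel (sunGraph n C).Adj :=
  fun i j => inferInstanceAs (Decidable (i ≠ j ∧ (i ∈ C ∨ j ∈ C)))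

/-- One-step neighborhood `N_G(I)` (including `I` itself). -/
def nbhd {n : ℕ} (G : SimpleGraph (Fin n)) (I : Set (Fin n)) : Set (Fin n) :=
  I ∪ {j | ∃ i ∈ I, G.Adj i j}

/-- Iterated neighborhood `N_{G^t}(N_{G^{t+1}}(⋯ N_{G^{t+R-1}}(I) ⋯))`. -/
def iterNbhd {n : ℕ} (G : ℕ → SimpleGraph (Fin n)) (t : ℕ) :
    ℕ → Set (Fin n) → Set (Fin n)
  | 0, I => I
  | R + 1, I => nbhd (G t) (iterNbhd G (t + 1) R I)

/-- Directed effective distance: smallest `R ≥ 1` such that a message sent from `i`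
at some round `t` reaches `j` after `R` rounds. -/
def effDistOne {n : ℕ} (G : ℕ → SimpleGraph (Fin n)) (i j : Fin n) : ℕ :=
  sInf {R | 1 ≤ R ∧ ∃ t, j ∈ iterNbhd G t R {i}}

/-- Effective distance between two nodes. -/
def effDistPair {n : ℕ} (G : ℕ → SimpleGraph (Fin n)) (i j : Fin n) : ℕ :=
  max (effDistOne G i j) (effDistOne G j i)

/-- Effective distance between two disjoint sets of nodes. -/
def effDistSets {n : ℕ} (G : ℕ → SimpleGraph (Fin n)) (I1 I2 : Set (Fin n)) : ℕ :=
  sInf {m | ∃ i ∈ I1, ∃ j ∈ I2, m = effDistPair G i j}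


/-! ### Auxiliary lemmas -/

section Aux

variable {n : ℕ}

lemma nbhd_center_mem {C : Finset (Fin n)} {S : Set (Fin n)} {c : Fin n}
    (hcC : c ∈ C) (hcS : c ∈ S) : nbhd (sunGraph n C) S = Set.univ := by
  ext j
  simp only [nbhd, Set.mem_union, Set.mem_setOf_eq, Set.mem_univ, iff_true]
  by_cases hj : j = c
  · exact Or.inl (hj ▸ hcS)
  · exact Or.inr ⟨c, hcS, ⟨fun h => hj h.symm, Or.inl hcC⟩⟩

lemma nbhd_disjoint {C : Finset (Fin n)} {S : Set (Fin n)}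
    (hne : S.Nonempty) (hd : ∀ s ∈ S, s ∉ C) :
    nbhd (sunGraph n C) S = S ∪ ↑C := by
  ext j
  simp only [nbhd, Set.mem_union, Set.mem_setOf_eq, Finset.mem_coe]
  constructor
  · rintro (hj | ⟨s, hs, hadj⟩)
    · exact Or.inl hj
    · rcases hadj.2 with h | h
      · exact absurd h (hd s hs)
      · exact Or.inr h
  · rintro (hj | hj)
    · exact Or.inl hj
    · obtain ⟨s, hs⟩ := hne
      exact Or.inr ⟨s, hs, ⟨fun h => (hd s hs) (by rw [h]; exact hj), Or.inr hj⟩⟩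

/-! ### The weight matrix -/

/-- The weight matrix compatible with the sun graph `S_{n,C}`. -/
def Wmat (n : ℕ) (C : Finset (Fin n)) : Matrix (Fin n) (Fin n) ℝ :=
  Matrix.of fun i j =>
    if i ∈ C ∨ j ∈ C then (n : ℝ)⁻¹
    else if i = j then ((n - C.card : ℕ) : ℝ) / n else 0

lemma Wmat_apply (C : Finset (Fin n)) (i j : Fin n) :
    Wmat n C i j = if i ∈ C ∨ j ∈ C then (n : ℝ)⁻¹
      else if i = j then ((n - C.card : ℕ) : ℝ) / n else 0 := rfl

lemma Wmat_support (C : Finset (Fin n)) {i j : Fin n} (hij : i ≠ j)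
    (hadj : ¬ (sunGraph n C).Adj i j) : Wmat n C i j = 0 := by
  have hC : ¬ (i ∈ C ∨ j ∈ C) := fun h => hadj ⟨hij, h⟩
  simp [Wmat_apply, hC, hij]

lemma card_compl_cast (hn : 0 < n) (C : Finset (Fin n)) :
    ((n - C.card : ℕ) : ℝ) = (n : ℝ) - C.card := by
  have hcn : C.card ≤ n := by
    have := Finset.card_le_univ C
    simpa using this
  push_cast [Nat.cast_sub hcn]
  ring

lemma Wmat_row_sum (hn : 0 < n) (C : Finset (Fin n)) (i : Fin n) :
    ∑ j, Wmat n C i j = 1 := by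
  have hn' : (n : ℝ) ≠ 0 := Nat.cast_ne_zero.mpr hn.ne'
  by_cases hi : i ∈ C
  · have h1 : ∀ j ∈ Finset.univ, Wmat n C i j = (n:ℝ)⁻¹ := fun j _ => by
      simp [Wmat_apply, hi]
    rw [Finset.sum_congr rfl h1, Finset.sum_const]
    simp only [Finset.card_univ, Fintype.card_fin, nsmul_eq_mul]
    field_simp
  · rw [← Finset.sum_add_sum_compl C]
    have h1 : ∑ j ∈ C, Wmat n C i j = (C.card : ℝ) * (n:ℝ)⁻¹ := by
      rw [Finset.sum_congr rfl (fun j hj => by simp [Wmat_apply, hj] :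
        ∀ j ∈ C, Wmat n C i j = (n:ℝ)⁻¹), Finset.sum_const, nsmul_eq_mul]
    have h2 : ∑ j ∈ Cᶜ, Wmat n C i j = ((n - C.card : ℕ) : ℝ) / n := by
      have he : ∀ j ∈ Cᶜ, Wmat n C i j
          = if i = j then ((n - C.card : ℕ) : ℝ) / n else 0 := by
        intro j hj
        have hjC : j ∉ C := Finset.mem_compl.mp hj
        simp [Wmat_apply, hi, hjC]
      rw [Finset.sum_congr rfl he, Finset.sum_ite_eq, if_pos (Finset.mem_compl.mpr hi)]
    rw [h1, h2, card_compl_cast hn]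
    field_simp
    ring

lemma Wmat_symm (C : Finset (Fin n)) (i j : Fin n) : Wmat n C i j = Wmat n C j i := by
  by_cases h : i = j
  · subst h; rfl
  · simp only [Wmat_apply]
    by_cases hC : i ∈ C ∨ j ∈ C
    · simp [hC, hC.symm]
    · have hC' : ¬(j ∈ C ∨ i ∈ C) := fun hh => hC hh.symm
      simp [hC, hC', h, Ne.symm h]

lemma Wmat_col_sum (hn : 0 < n) (C : Finset (Fin n)) (j : Fin n) :
    ∑ i, Wmat n C i j = 1 := by
  rw [Finset.sum_congr rfl fun i _ => Wmat_symm C i j]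
  exact Wmat_row_sum hn C j

lemma specNorm_le_of_sq_bound {M : Matrix (Fin n) (Fin n) ℝ} {b : ℝ} (hb : 0 ≤ b)
    (h : ∀ x : Fin n → ℝ, ∑ i, ((M *ᵥ x) i)^2 ≤ b^2 * ∑ i, (x i)^2) :
    specNorm M ≤ b := by
  refine ContinuousLinearMap.opNorm_le_bound _ hb fun x => ?_
  have hnx : ∀ v : EuclideanSpace ℝ (Fin n), ‖v‖ = Real.sqrt (∑ i, (v i)^2) := by
    intro v
    rw [EuclideanSpace.norm_eq]
    congr 1
    exact Finset.sum_congr rfl fun i _ => by rw [Real.norm_eq_abs, sq_abs]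
  have happ : (LinearMap.toContinuousLinearMap (Matrix.toEuclideanLin (𝕜 := ℝ) M)) x
      = Matrix.toEuclideanLin (𝕜 := ℝ) M x := by
    rw [LinearMap.coe_toContinuousLinearMap']
  rw [happ, hnx, hnx]
  have hco : ∀ i, (Matrix.toEuclideanLin (𝕜 := ℝ) M x) i = (M *ᵥ (fun j => x j)) i :=
    fun i => rfl
  calc Real.sqrt (∑ i, ((Matrix.toEuclideanLin (𝕜 := ℝ) M x) i)^2)
      = Real.sqrt (∑ i, ((M *ᵥ (fun j => x j)) i)^2) := by
        first
        | rfl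
        | · congr 1
            exact Finset.sum_congr rfl fun i _ => by rw [hco]
    _ ≤ Real.sqrt (b^2 * ∑ i, (x i)^2) := Real.sqrt_le_sqrt (h _)
    _ = b * Real.sqrt (∑ i, (x i)^2) := by
        rw [Real.sqrt_mul (sq_nonneg b), Real.sqrt_sq hb]

lemma Wmat_sub_avg_mulVec (hn : 0 < n) (C : Finset (Fin n)) (x : Fin n → ℝ) (i : Fin n) :
    ((Wmat n C - avgMat n) *ᵥ x) i =
      if i ∈ C then 0 else (((n - C.card : ℕ) : ℝ) * x i - ∑ j ∈ Cᶜ, x j) / n := by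
  have hn' : (n : ℝ) ≠ 0 := Nat.cast_ne_zero.mpr hn.ne'
  have h0 : ((Wmat n C - avgMat n) *ᵥ x) i = ∑ j, (Wmat n C i j - (n:ℝ)⁻¹) * x j := by
    simp [Matrix.mulVec, dotProduct, Matrix.sub_apply, avgMat, onesMat]
  rw [h0]
  by_cases hi : i ∈ C
  · rw [if_pos hi]
    apply Finset.sum_eq_zero
    intro j _
    simp [Wmat_apply, hi]
  · rw [if_neg hi, ← Finset.sum_add_sum_compl C]
    have h1 : ∑ j ∈ C, (Wmat n C i j - (n:ℝ)⁻¹) * x j = 0 :=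
      Finset.sum_eq_zero fun j hj => by simp [Wmat_apply, hj]
    have h2 : ∑ j ∈ Cᶜ, (Wmat n C i j - (n:ℝ)⁻¹) * x j
        = (((n - C.card : ℕ):ℝ) * x i - ∑ j ∈ Cᶜ, x j) / n := by
      have he : ∀ j ∈ Cᶜ, (Wmat n C i j - (n:ℝ)⁻¹) * x j
          = (if i = j then ((n - C.card : ℕ):ℝ)/n * x j else 0) - (n:ℝ)⁻¹ * x j := by
        intro j hj
        have hjC : j ∉ C := Finset.mem_compl.mp hj
        by_cases hij : i = j
        · simp only [Wmat_apply, hi, hjC, hij, if_pos, or_self, if_false, if_true]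
          ring
        · simp only [Wmat_apply, hi, hjC, hij, or_self, if_false]
          ring
      rw [Finset.sum_congr rfl he, Finset.sum_sub_distrib, Finset.sum_ite_eq,
        if_pos (Finset.mem_compl.mpr hi), ← Finset.mul_sum]
      field_simp
    rw [h1, h2, zero_add]

lemma Wmat_specNorm (hn : 0 < n) (C : Finset (Fin n)) {β : ℝ}
    (hcard : (n:ℝ) * (1 - β) ≤ C.card) :
    specNorm (Wmat n C - avgMat n) ≤ β := by
  set q : ℕ := n - C.card with hq
  have hn' : (0:ℝ) < n := by exact_mod_cast hn
  have hqr : (q:ℝ) = (n:ℝ) - C.card := card_compl_cast hn C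
  have hqb : (q:ℝ) ≤ (n:ℝ) * β := by nlinarith
  have hq0 : (0:ℝ) ≤ q := Nat.cast_nonneg q
  have hβ0 : 0 ≤ β := by nlinarith
  apply specNorm_le_of_sq_bound hβ0
  intro x
  set s := ∑ j ∈ Cᶜ, x j with hs
  have hcc : (Cᶜ : Finset (Fin n)).card = q := by
    rw [Finset.card_compl]
    simp [hq]
  have hm : ∀ i, ((Wmat n C - avgMat n) *ᵥ x) i
      = if i ∈ C then 0 else ((q:ℝ) * x i - s)/n :=
    fun i => Wmat_sub_avg_mulVec hn C x i
  have hsum : ∑ i, (((Wmat n C - avgMat n) *ᵥ x) i) ^ 2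
      = ∑ i ∈ Cᶜ, (((q:ℝ) * x i - s)/n)^2 := by
    rw [← Finset.sum_add_sum_compl C]
    have hz : ∑ i ∈ C, (((Wmat n C - avgMat n) *ᵥ x) i) ^ 2 = 0 :=
      Finset.sum_eq_zero fun i hi => by rw [hm i, if_pos hi]; ring
    rw [hz, zero_add]
    exact Finset.sum_congr rfl fun i hi => by
      rw [hm i, if_neg (Finset.mem_compl.mp hi)]
  rw [hsum]
  have key : ∑ i ∈ Cᶜ, ((q:ℝ) * x i - s)^2
      = (q:ℝ)^2 * ∑ i ∈ Cᶜ, (x i)^2 - (q:ℝ) * s^2 := by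
    have expand : ∀ i ∈ Cᶜ, ((q:ℝ) * x i - s)^2
        = (q:ℝ)^2 * (x i)^2 - (2*(q:ℝ)*s) * x i + s^2 := fun i _ => by ring
    rw [Finset.sum_congr rfl expand, Finset.sum_add_distrib, Finset.sum_sub_distrib,
      ← Finset.mul_sum, ← Finset.mul_sum, Finset.sum_const, hcc, nsmul_eq_mul, ← hs]
    ring
  have hle2 : ∑ i ∈ Cᶜ, (x i)^2 ≤ ∑ i, (x i)^2 :=
    Finset.sum_le_sum_of_subset_of_nonneg (Finset.subset_univ _) (fun i _ _ => sq_nonneg _)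
  have e1 : ∑ i ∈ Cᶜ, (((q:ℝ)*x i - s)/n)^2 = (∑ i ∈ Cᶜ, ((q:ℝ)*x i - s)^2)/(n:ℝ)^2 := by
    rw [Finset.sum_div]
    exact Finset.sum_congr rfl fun i _ => by ring
  rw [e1, key, div_le_iff₀ (by positivity)]
  have hS0 : 0 ≤ ∑ i, (x i)^2 := Finset.sum_nonneg fun i _ => sq_nonneg _
  have hh1 : (q:ℝ)^2 * ∑ i ∈ Cᶜ, (x i)^2 ≤ (q:ℝ)^2 * ∑ i, (x i)^2 :=
    mul_le_mul_of_nonneg_left hle2 (sq_nonneg _)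
  have hh2 : (q:ℝ)^2 ≤ ((n:ℝ)*β)^2 := by nlinarith
  have hh3 : (q:ℝ)^2 * ∑ i, (x i)^2 ≤ ((n:ℝ)*β)^2 * ∑ i, (x i)^2 :=
    mul_le_mul_of_nonneg_right hh2 hS0
  nlinarith [mul_nonneg hq0 (sq_nonneg s)]

lemma Wmat_memW (hn : 0 < n) (C : Finset (Fin n)) {β : ℝ}
    (hcard : (n:ℝ) * (1 - β) ≤ C.card) : memW n β (Wmat n C) := by
  refine ⟨?_, ?_, Wmat_specNorm hn C hcard⟩
  · funext i
    show ∑ j, Wmat n C i j * onesVec n j = onesVec n i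
    simp only [onesVec, mul_one]
    exact Wmat_row_sum hn C i
  · funext j
    show ∑ i, onesVec n i * Wmat n C i j = onesVec n j
    simp only [onesVec, one_mul]
    exact Wmat_col_sum hn C j

/-! ### Rotating blocks of centers -/

/-- Index of the block containing `x` within `F` (with `p` blocks of size `k`). -/
def blockIdx (F : Finset (Fin n)) (k p : ℕ) (x : Fin n) : ℕ :=
  if hx : x ∈ F then
    min ((((F.orderIsoOfFin rfl).symm ⟨x, hx⟩ : Fin F.card) : ℕ) / k) (p - 1)
  else p

/-- The rotating center sets: at time `t` the block with index `t % p`. -/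
def blocks (F : Finset (Fin n)) (k p : ℕ) (t : ℕ) : Finset (Fin n) :=
  F.filter (fun x => blockIdx F k p x = t % p)

lemma blocks_subset (F : Finset (Fin n)) (k p t : ℕ) : blocks F k p t ⊆ F :=
  Finset.filter_subset _ _

lemma mem_blocks_iff {F : Finset (Fin n)} {k p t : ℕ} {x : Fin n} :
    x ∈ blocks F k p t ↔ x ∈ F ∧ blockIdx F k p x = t % p := Finset.mem_filter

lemma blockIdx_lt {F : Finset (Fin n)} {k p : ℕ} (hp : 0 < p) {x : Fin n} (hx : x ∈ F) :
    blockIdx F k p x < p := by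
  rw [blockIdx, dif_pos hx]
  exact lt_of_le_of_lt (min_le_right _ _) (by omega)

lemma le_card_blocks {F : Finset (Fin n)} {k p : ℕ} (hk : 0 < k) (hp : 0 < p)
    (hpk : p * k ≤ F.card) (t : ℕ) : k ≤ (blocks F k p t).card := by
  have ht : t % p < p := Nat.mod_lt _ hp
  have hlt : ∀ s : Fin k, k * (t % p) + (s:ℕ) < F.card := by
    intro s
    have hm : k * (t % p + 1) = k * (t % p) + k := by ring
    have h2 : k * (t % p + 1) ≤ k * p := Nat.mul_le_mul_left k ht
    have h3 : k * p ≤ F.card := by rwa [mul_comm] at hpk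
    have h4 := s.isLt
    linarith
  set σ := F.orderIsoOfFin rfl with hσ
  let f : Fin k → Fin n := fun s => (σ ⟨k * (t % p) + s, hlt s⟩ : Fin n)
  have hmem : ∀ s, f s ∈ blocks F k p t := by
    intro s
    have hxF : (f s : Fin n) ∈ F := (σ ⟨_, hlt s⟩).2
    rw [mem_blocks_iff]
    refine ⟨hxF, ?_⟩
    rw [blockIdx, dif_pos hxF]
    have e0 : (⟨f s, hxF⟩ : {y // y ∈ F}) = σ ⟨k * (t % p) + s, hlt s⟩ := Subtype.ext rfl
    have e1 : σ.symm ⟨f s, hxF⟩ = ⟨k * (t % p) + s, hlt s⟩ := by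
      rw [e0, OrderIso.symm_apply_apply]
    rw [e1]
    have e2 : (k * (t % p) + (s:ℕ)) / k = t % p := by
      rw [Nat.mul_add_div hk, Nat.div_eq_of_lt s.isLt, add_zero]
    show min ((k * (t % p) + (s:ℕ)) / k) (p - 1) = t % p
    rw [e2]
    exact min_eq_left (by omega)
  have hinj : Function.Injective f := by
    intro a b hab
    have h1 : σ ⟨k * (t % p) + a, hlt a⟩ = σ ⟨k * (t % p) + b, hlt b⟩ :=
      Subtype.coe_injective hab
    have h2 : (⟨k * (t % p) + (a:ℕ), hlt a⟩ : Fin F.card)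
        = ⟨k * (t % p) + (b:ℕ), hlt b⟩ := σ.injective h1
    have h3 : k * (t % p) + (a:ℕ) = k * (t % p) + (b:ℕ) := by
      exact congrArg Fin.val h2
    exact Fin.ext (Nat.add_left_cancel h3)
  calc k = (Finset.univ : Finset (Fin k)).card := by simp
    _ ≤ (blocks F k p t).card :=
        Finset.card_le_card_of_injOn f (fun s _ => hmem s) (hinj.injOn)

lemma iterNbhd_blocks (F : Finset (Fin n)) (k p : ℕ) (hp : 0 < p) {i : Fin n} (hi : i ∉ F) :
    ∀ R, R ≤ p → ∀ t, iterNbhd (fun t => sunGraph n (blocks F k p t)) t R {i}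
      = {i} ∪ {x | ∃ s, s < R ∧ x ∈ blocks F k p (t + s)} := by
  intro R
  induction R with
  | zero =>
    intro _ t
    ext x
    simp [iterNbhd]
  | succ R ih =>
    intro hR t
    have hR' : R ≤ p := le_trans (Nat.le_succ R) hR
    show nbhd _ (iterNbhd _ (t+1) R {i}) = _
    rw [ih hR' (t+1), nbhd_disjoint ⟨i, Or.inl rfl⟩ ?hd]
    case hd =>
      rintro x (hx | ⟨s, hs, hx⟩) hxC
      · rw [Set.mem_singleton_iff] at hx
        subst hx
        exact hi (blocks_subset F k p t hxC)
      · rw [mem_blocks_iff] at hx hxC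
        have h12 : (t + 1 + s) % p = t % p := hx.2.symm.trans hxC.2
        have hmod : (t + (1 + s)) % p = (t + 0) % p := by
          rw [show t + (1+s) = t + 1 + s from by omega, add_zero, h12]
        have hcan : (1 + s) ≡ 0 [MOD p] := Nat.ModEq.add_left_cancel' t hmod
        have hz : (1 + s) % p = 0 := by simpa [Nat.ModEq] using hcan
        have hlt : 1 + s < p := by omega
        rw [Nat.mod_eq_of_lt hlt] at hz
        omega
    ext x
    simp only [Set.mem_union, Set.mem_setOf_eq, Set.mem_singleton_iff, Finset.mem_coe]
    constructor
    · rintro ((rfl | ⟨s, hs, hx⟩) | hx)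
      · exact Or.inl rfl
      · exact Or.inr ⟨s + 1, by omega, by rwa [show t + (s+1) = t + 1 + s from by omega]⟩
      · exact Or.inr ⟨0, by omega, by rwa [add_zero]⟩
    · rintro (rfl | ⟨s, hs, hx⟩)
      · exact Or.inl (Or.inl rfl)
      · cases s with
        | zero => exact Or.inr (by rwa [add_zero] at hx)
        | succ s' =>
            exact Or.inl (Or.inr ⟨s', by omega,
              by rwa [show t + 1 + s' = t + (s'+1) from by omega]⟩)

lemma effDistOne_blocks (F : Finset (Fin n)) (k p : ℕ) (hp : 0 < p)
    (hne : (blocks F k p 0).Nonempty)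
    {i j : Fin n} (hi : i ∉ F) (hj : j ∉ F) (hij : j ≠ i) :
    effDistOne (fun t => sunGraph n (blocks F k p t)) i j = p + 1 := by
  set G := fun t => sunGraph n (blocks F k p t) with hG
  have hmem : (p + 1) ∈ {R | 1 ≤ R ∧ ∃ t, j ∈ iterNbhd G t R {i}} := by
    refine ⟨by omega, 0, ?_⟩
    show j ∈ nbhd (G 0) (iterNbhd G 1 p {i})
    have hform := iterNbhd_blocks F k p hp hi p le_rfl 1
    rw [hG, hform]
    have hcover : (↑F : Set (Fin n))
        ⊆ ({i} ∪ {x | ∃ s, s < p ∧ x ∈ blocks F k p (1 + s)} : Set (Fin n)) := by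
      intro x hxF
      have hxF' : x ∈ F := hxF
      have hrp : blockIdx F k p x < p := blockIdx_lt hp hxF'
      right
      by_cases hr0 : blockIdx F k p x = 0
      · refine ⟨p - 1, by omega, ?_⟩
        rw [mem_blocks_iff]
        exact ⟨hxF', by rw [show 1 + (p-1) = p from by omega, Nat.mod_self, hr0]⟩
      · refine ⟨blockIdx F k p x - 1, by omega, ?_⟩
        rw [mem_blocks_iff]
        refine ⟨hxF', ?_⟩
        rw [show 1 + (blockIdx F k p x - 1) = blockIdx F k p x from by omega,
          Nat.mod_eq_of_lt hrp]
    obtain ⟨c, hc⟩ := hne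
    have hcS : c ∈ ({i} ∪ {x | ∃ s, s < p ∧ x ∈ blocks F k p (1 + s)} : Set (Fin n)) :=
      hcover (Finset.mem_coe.mpr (blocks_subset F k p 0 hc))
    rw [nbhd_center_mem hc hcS]
    trivial
  refine le_antisymm (Nat.sInf_le hmem) (le_csInf ⟨_, hmem⟩ ?_)
  rintro R ⟨hR1, t, hRt⟩
  by_contra hlt
  push_neg at hlt
  have hRp : R ≤ p := by omega
  rw [hG, iterNbhd_blocks F k p hp hi R hRp t] at hRt
  rcases hRt with hj' | ⟨s, _, hx⟩
  · exact hij (Set.mem_singleton_iff.mp hj')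
  · exact hj (blocks_subset F k p (t+s) hx)

lemma effDistOne_univ_bounds (hn : 0 < n) (i j : Fin n) :
    1 ≤ effDistOne (fun _ => sunGraph n Finset.univ) i j ∧
      effDistOne (fun _ => sunGraph n Finset.univ) i j ≤ 2 := by
  set G : ℕ → SimpleGraph (Fin n) := fun _ => sunGraph n Finset.univ with hG
  have h2 : (2:ℕ) ∈ {R | 1 ≤ R ∧ ∃ t, j ∈ iterNbhd G t R {i}} := by
    refine ⟨by omega, 0, ?_⟩
    show j ∈ nbhd (G 0) (nbhd (G 1) ({i} : Set (Fin n)))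
    have e1 : nbhd (G 1) ({i} : Set (Fin n)) = Set.univ :=
      nbhd_center_mem (Finset.mem_univ i) rfl
    rw [e1]
    exact Set.mem_union_left _ (Set.mem_univ j)
  have hne : {R | 1 ≤ R ∧ ∃ t, j ∈ iterNbhd G t R {i}}.Nonempty := ⟨2, h2⟩
  exact ⟨(Nat.sInf_mem hne).1, Nat.sInf_le h2⟩

end Aux


/-- The main construction, with explicit constants `c = 1/4` and `C = 2`. -/
lemma key_construction :
    ∀ (n : ℕ), 2 ≤ n →
      ∀ (I1 I2 : Finset (Fin n)), I1.Nonempty → I2.Nonempty → Disjoint I1 I2 →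
      ∀ β : ℝ, 0 ≤ β → β ≤ 1 - 1 / (n : ℝ) →
      ∃ (Cseq : ℕ → Finset (Fin n)) (W : ℕ → Matrix (Fin n) (Fin n) ℝ),
        (∀ t, (Cseq t).Nonempty) ∧
        (∀ t, memW n β (W t)) ∧
        (∀ t i j, i ≠ j → ¬ (sunGraph n (Cseq t)).Adj i j → W t i j = 0) ∧
        (1/4 : ℝ) * ((1 - ((I1.card : ℝ) + (I2.card : ℝ)) / (n : ℝ)) / (1 - β) + 1)
          ≤ (effDistSets (fun t => sunGraph n (Cseq t)) ↑I1 ↑I2 : ℝ) ∧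
        (effDistSets (fun t => sunGraph n (Cseq t)) ↑I1 ↑I2 : ℝ)
          ≤ (2 : ℝ) * ((1 - ((I1.card : ℝ) + (I2.card : ℝ)) / (n : ℝ)) / (1 - β) + 1) := by
  intro n hn2 I1 I2 hne1 hne2 hdisj β hβ0 hβ1
  have hn0 : 0 < n := by omega
  have hnR : (0:ℝ) < n := by exact_mod_cast hn0
  have hinvn : (0:ℝ) < 1 / n := by positivity
  have h1β : 0 < 1 - β := lt_of_lt_of_le hinvn (by linarith)
  have hA1 : (1:ℝ) ≤ (n:ℝ) * (1 - β) := by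
    have h := mul_le_mul_of_nonneg_left (show 1/(n:ℝ) ≤ 1 - β by linarith) (le_of_lt hnR)
    have : (n:ℝ) * (1/n) = 1 := by field_simp
    linarith
  -- the set of free vertices
  set F : Finset (Fin n) := (I1 ∪ I2)ᶜ with hF
  set m : ℕ := F.card with hm
  have hiF : ∀ i ∈ I1, i ∉ F := by
    intro i hi hiF
    exact (Finset.mem_compl.mp hiF) (Finset.mem_union_left _ hi)
  have hjF : ∀ j ∈ I2, j ∉ F := by
    intro j hj hjF
    exact (Finset.mem_compl.mp hjF) (Finset.mem_union_right _ hj)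
  have hXm : 1 - ((I1.card : ℝ) + (I2.card : ℝ)) / (n : ℝ) = (m:ℝ)/(n:ℝ) := by
    have hcard_un : (I1 ∪ I2).card = I1.card + I2.card :=
      Finset.card_union_of_disjoint hdisj
    have hcc : F.card = n - (I1 ∪ I2).card := by
      rw [hF, Finset.card_compl]
      simp
    have hle : (I1 ∪ I2).card ≤ n := by
      have := Finset.card_le_univ (I1 ∪ I2)
      simpa using this
    have hmn : m + (I1.card + I2.card) = n := by omega
    have hmnR : (m:ℝ) + ((I1.card:ℝ) + (I2.card:ℝ)) = (n:ℝ) := by exact_mod_cast hmn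
    field_simp
    linarith
  rw [hXm]
  -- block size
  set k : ℕ := ⌈(n:ℝ) * (1 - β)⌉₊ with hk
  have hk0 : 0 < k := Nat.ceil_pos.mpr (by linarith)
  have hkle : (n:ℝ) * (1 - β) ≤ (k:ℝ) := Nat.le_ceil _
  have hkup : (k:ℝ) ≤ (n:ℝ) * (1 - β) + 1 := (Nat.ceil_lt_add_one (by positivity)).le
  have hk2 : (k:ℝ) ≤ 2 * ((n:ℝ) * (1 - β)) := by linarith
  obtain ⟨i0, hi0⟩ := hne1
  obtain ⟨j0, hj0⟩ := hne2
  by_cases hkm : k ≤ m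
  -- Case A : rotating blocks
  · set p : ℕ := m / k with hp
    have hp0 : 0 < p := Nat.div_pos hkm hk0
    have hpk : p * k ≤ m := by
      rw [hp]
      exact Nat.div_mul_le_self m k
    have hbne : ∀ t, (blocks F k p t).Nonempty := fun t =>
      Finset.card_pos.mp (lt_of_lt_of_le hk0 (le_card_blocks hk0 hp0 hpk t))
    refine ⟨fun t => blocks F k p t, fun t => Wmat n (blocks F k p t), hbne, ?_, ?_, ?_⟩
    · intro t
      apply Wmat_memW hn0
      have : (k:ℝ) ≤ ((blocks F k p t).card : ℝ) := by
        exact_mod_cast le_card_blocks hk0 hp0 hpk t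
      linarith
    · intro t i j hij hadj
      exact Wmat_support _ hij hadj
    -- distance computation
    have hpair : ∀ i ∈ I1, ∀ j ∈ I2,
        effDistPair (fun t => sunGraph n (blocks F k p t)) i j = p + 1 := by
      intro i hi j hj
      have hij : j ≠ i := by
        intro h
        exact (Finset.disjoint_left.mp hdisj hi) (h ▸ hj)
      rw [effDistPair, effDistOne_blocks F k p hp0 (hbne 0) (hiF i hi) (hjF j hj) hij,
        effDistOne_blocks F k p hp0 (hbne 0) (hjF j hj) (hiF i hi) (Ne.symm hij), max_self]
    have hsets : effDistSets (fun t => sunGraph n (blocks F k p t)) ↑I1 ↑I2 = p + 1 := by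
      refine le_antisymm (Nat.sInf_le ⟨i0, Finset.mem_coe.mpr hi0, j0, Finset.mem_coe.mpr hj0,
        (hpair i0 hi0 j0 hj0).symm⟩) ?_
      refine le_csInf ⟨p + 1, i0, Finset.mem_coe.mpr hi0, j0, Finset.mem_coe.mpr hj0,
        (hpair i0 hi0 j0 hj0).symm⟩ ?_
      rintro b ⟨i, hi, j, hj, rfl⟩
      rw [hpair i (Finset.mem_coe.mp hi) j (Finset.mem_coe.mp hj)]
    rw [hsets]
    -- numeric bounds
    have hdd : ((m:ℝ)/n)/(1-β) = (m:ℝ)/((n:ℝ)*(1-β)) := div_div _ _ _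
    rw [hdd]
    have hden : (0:ℝ) < (n:ℝ)*(1-β) := by positivity
    have hpR : (0:ℝ) ≤ (p:ℝ) := Nat.cast_nonneg p
    constructor
    · -- lower bound
      have h1 : k * p + m % k = m := by
        have := Nat.div_add_mod m k
        rw [← hp] at this
        exact this
      have h2 : m % k < k := Nat.mod_lt _ hk0
      have h1R : (k:ℝ) * (p:ℝ) + ((m % k : ℕ):ℝ) = (m:ℝ) := by exact_mod_cast h1
      have h2R : ((m % k : ℕ):ℝ) < (k:ℝ) := by exact_mod_cast h2
      have hcast : (m:ℝ) < (k:ℝ) * ((p:ℝ) + 1) := by nlinarith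
      have hmul : (k:ℝ) * ((p:ℝ)+1) ≤ 2 * ((n:ℝ)*(1-β)) * ((p:ℝ)+1) :=
        mul_le_mul_of_nonneg_right hk2 (by linarith)
      have hdivle : (m:ℝ)/((n:ℝ)*(1-β)) ≤ 2*((p:ℝ)+1) := by
        rw [div_le_iff₀ hden]
        nlinarith
      have hcastp : ((p + 1 : ℕ) : ℝ) = (p:ℝ) + 1 := by push_cast; ring
      rw [hcastp]
      linarith
    · -- upper bound
      have hnat : p * k ≤ m := by
        have := Nat.div_mul_le_self m k
        rw [← hp] at this
        exact this
      have hcast : (p:ℝ) * (k:ℝ) ≤ (m:ℝ) := by exact_mod_cast hnat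
      have hcast' : (k:ℝ) * (p:ℝ) ≤ (m:ℝ) := by linarith [hcast, mul_comm (p:ℝ) (k:ℝ)]
      have hmul : (n:ℝ)*(1-β) * (p:ℝ) ≤ (k:ℝ) * (p:ℝ) :=
        mul_le_mul_of_nonneg_right hkle hpR
      have hple : (p:ℝ) ≤ (m:ℝ)/((n:ℝ)*(1-β)) := by
        rw [le_div_iff₀ hden]
        nlinarith [hcast', hmul]
      have hq0 : (0:ℝ) ≤ (m:ℝ)/((n:ℝ)*(1-β)) := by positivity
      have hcastp : ((p + 1 : ℕ) : ℝ) = (p:ℝ) + 1 := by push_cast; ring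
      rw [hcastp]
      linarith
  -- Case B : k > m, a single complete sun graph
  · push_neg at hkm
    refine ⟨fun _ => Finset.univ, fun _ => Wmat n Finset.univ,
      fun _ => ⟨i0, Finset.mem_univ _⟩, ?_, ?_, ?_⟩
    · intro t
      apply Wmat_memW hn0
      have : ((Finset.univ : Finset (Fin n)).card : ℝ) = n := by simp
      rw [this]
      nlinarith
    · intro t i j hij hadj
      exact Wmat_support _ hij hadj
    -- distance bounds
    set G : ℕ → SimpleGraph (Fin n) := fun _ => sunGraph n Finset.univ with hG
    set d : ℕ := effDistSets G ↑I1 ↑I2 with hd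
    have hdset : d ∈ {r | ∃ i ∈ (↑I1 : Set (Fin n)), ∃ j ∈ (↑I2 : Set (Fin n)),
        r = effDistPair G i j} := by
      apply Nat.sInf_mem
      exact ⟨effDistPair G i0 j0, i0, Finset.mem_coe.mpr hi0, j0, Finset.mem_coe.mpr hj0, rfl⟩
    obtain ⟨i, hi, j, hj, hdeq⟩ := hdset
    have hb1 := effDistOne_univ_bounds hn0 i j
    have hb2 := effDistOne_univ_bounds hn0 j i
    have hd1 : 1 ≤ d := by
      rw [hdeq, effDistPair]
      exact le_max_of_le_left hb1.1
    have hd2 : d ≤ 2 := by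
      rw [hdeq, effDistPair]
      exact max_le hb1.2 hb2.2
    have hd1R : (1:ℝ) ≤ (d:ℝ) := by exact_mod_cast hd1
    have hd2R : (d:ℝ) ≤ 2 := by exact_mod_cast hd2
    -- T is small in this case
    have hmk : (m:ℝ) + 1 ≤ (k:ℝ) := by exact_mod_cast hkm
    have hden : (0:ℝ) < (n:ℝ)*(1-β) := by positivity
    have hdd : ((m:ℝ)/n)/(1-β) = (m:ℝ)/((n:ℝ)*(1-β)) := div_div _ _ _
    have hm1 : (m:ℝ) ≤ (n:ℝ)*(1-β) := by linarith
    have hTle : ((m:ℝ)/n)/(1-β) ≤ 1 := by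
      rw [hdd, div_le_one hden]
      exact hm1
    have hT0 : (0:ℝ) ≤ ((m:ℝ)/n)/(1-β) := by positivity
    exact ⟨by linarith, by linarith⟩


/-- Theorem: sun-shaped graphs realize the optimal relation between
effective distance and connectivity.  There are absolute constants `c, C > 0` such that
for every `n ≥ 2`, every pair of disjoint nonempty subsets `I1, I2` of `[n]`, and every
`β ∈ [0, 1 - 1/n]`, there is a sequence of center sets `Cseq` and associated weight
matrices `W t ∈ W_{n,β}` compatible with the sun-shaped graphs `S_{n, Cseq t}`, whose
effective distance between `I1` and `I2` is
`Θ((1 - (|I1|+|I2|)/n)/(1-β) + 1)`.  In particular (second part), whenever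
`1 - (|I1|+|I2|)/n ≥ c₀` for an absolute constant `c₀ > 0`, the effective distance is
`Θ((1-β)⁻¹)`. -/
theorem effDist_sunGraph_theta :
    (∃ c C : ℝ, 0 < c ∧ 0 < C ∧
      ∀ (n : ℕ), 2 ≤ n →
      ∀ (I1 I2 : Finset (Fin n)), I1.Nonempty → I2.Nonempty → Disjoint I1 I2 →
      ∀ β : ℝ, 0 ≤ β → β ≤ 1 - 1 / (n : ℝ) →
      ∃ (Cseq : ℕ → Finset (Fin n)) (W : ℕ → Matrix (Fin n) (Fin n) ℝ),
        (∀ t, (Cseq t).Nonempty) ∧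
        (∀ t, memW n β (W t)) ∧
        (∀ t i j, i ≠ j → ¬ (sunGraph n (Cseq t)).Adj i j → W t i j = 0) ∧
        c * ((1 - ((I1.card : ℝ) + (I2.card : ℝ)) / (n : ℝ)) / (1 - β) + 1)
          ≤ (effDistSets (fun t => sunGraph n (Cseq t)) ↑I1 ↑I2 : ℝ) ∧
        (effDistSets (fun t => sunGraph n (Cseq t)) ↑I1 ↑I2 : ℝ)
          ≤ C * ((1 - ((I1.card : ℝ) + (I2.card : ℝ)) / (n : ℝ)) / (1 - β) + 1))
    ∧
    (∀ c₀ : ℝ, 0 < c₀ →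
      ∃ c' C' : ℝ, 0 < c' ∧ 0 < C' ∧
      ∀ (n : ℕ), 2 ≤ n →
      ∀ (I1 I2 : Finset (Fin n)), I1.Nonempty → I2.Nonempty → Disjoint I1 I2 →
      ∀ β : ℝ, 0 ≤ β → β ≤ 1 - 1 / (n : ℝ) →
      c₀ ≤ 1 - ((I1.card : ℝ) + (I2.card : ℝ)) / (n : ℝ) →
      ∃ (Cseq : ℕ → Finset (Fin n)) (W : ℕ → Matrix (Fin n) (Fin n) ℝ),
        (∀ t, (Cseq t).Nonempty) ∧
        (∀ t, memW n β (W t)) ∧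
        (∀ t i j, i ≠ j → ¬ (sunGraph n (Cseq t)).Adj i j → W t i j = 0) ∧
        c' * (1 - β)⁻¹
          ≤ (effDistSets (fun t => sunGraph n (Cseq t)) ↑I1 ↑I2 : ℝ) ∧
        (effDistSets (fun t => sunGraph n (Cseq t)) ↑I1 ↑I2 : ℝ)
          ≤ C' * (1 - β)⁻¹) := by
  constructor
  · exact ⟨1/4, 2, by norm_num, by norm_num, key_construction⟩
  · intro c₀ hc₀
    refine ⟨c₀/4, 4, by positivity, by norm_num, ?_⟩
    intro n hn2 I1 I2 hne1 hne2 hdisj β hβ0 hβ1 hc₀X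
    obtain ⟨Cseq, W, h1, h2, h3, h4, h5⟩ :=
      key_construction n hn2 I1 I2 hne1 hne2 hdisj β hβ0 hβ1
    have hn0 : 0 < n := by omega
    have hnR : (0:ℝ) < n := by exact_mod_cast hn0
    have hinvn : (0:ℝ) < 1/n := by positivity
    have h1β : 0 < 1 - β := lt_of_lt_of_le hinvn (by linarith)
    have hinv : (0:ℝ) < (1-β)⁻¹ := by positivity
    have hX1 : 1 - ((I1.card : ℝ) + (I2.card : ℝ)) / (n : ℝ) ≤ 1 := by
      have : 0 ≤ ((I1.card : ℝ) + (I2.card : ℝ)) / (n : ℝ) := by positivity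
      linarith
    have hXdiv : (1 - ((I1.card : ℝ) + (I2.card : ℝ)) / (n : ℝ)) / (1-β)
        = (1 - ((I1.card : ℝ) + (I2.card : ℝ)) / (n : ℝ)) * (1-β)⁻¹ := div_eq_mul_inv _ _
    rw [hXdiv] at h4 h5
    have hginv : (1:ℝ) ≤ (1-β)⁻¹ := by
      have hc : (1-β) * (1-β)⁻¹ = 1 := mul_inv_cancel₀ (ne_of_gt h1β)
      nlinarith
    refine ⟨Cseq, W, h1, h2, h3, ?_, ?_⟩
    · have hmul : c₀ * (1-β)⁻¹
          ≤ (1 - ((I1.card : ℝ) + (I2.card : ℝ)) / (n : ℝ)) * (1-β)⁻¹ :=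
        mul_le_mul_of_nonneg_right hc₀X (le_of_lt hinv)
      linarith
    · have hmul : (1 - ((I1.card : ℝ) + (I2.card : ℝ)) / (n : ℝ)) * (1-β)⁻¹
          ≤ 1 * (1-β)⁻¹ :=
        mul_le_mul_of_nonneg_right hX1 (le_of_lt hinv)
      linarith


end
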